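/- Let $A$ be a $q \times p$ real matrix of full row rank with $p > q$, $\Sigma_y$ a $q \times q$ symmetric positive-definite matrix, and $\Sigma_\theta$ a $p \times p$ symmetric positive-definite matrix. Define $\tilde\Sigma := \big(A^\top \Sigma_y^{-1} A - A^\top (A \Sigma_\theta A^\top)^{-1} A + \Sigma_\theta^{-1}\big)^{-1}$. Then $A \tilde\Sigma A^\top = \Sigma_y$. -/

import Mathlib

open Matrix

lemma aux_posdef_sandwich {p q : ℕ} (A : Matrix (Fin q) (Fin p) ℝ) (hA : A.rank = q)
    (St : Matrix (Fin p) (Fin p) ℝ) (hSt : St.PosDef) :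
    (A * St * Aᵀ).PosDef := by
  have hinj : Function.Injective (Aᵀ.mulVec) := by
    have h1 : Aᵀ.rank = q := by rw [rank_transpose, hA]
    have : Function.Injective Aᵀ.mulVecLin := by
      rw [← LinearMap.ker_eq_bot]
      have hrn := Aᵀ.mulVecLin.finrank_range_add_finrank_ker
      rw [Matrix.rank] at h1
      rw [h1, Module.finrank_fintype_fun_eq_card, Fintype.card_fin] at hrn
      have hker : Module.finrank ℝ (LinearMap.ker Aᵀ.mulVecLin) = 0 := by omega
      exact Submodule.finrank_eq_zero.mp hker
    exact this
  have hAeq : A = (Aᵀ)ᴴ := by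
    ext i j; simp
  refine PosDef.of_dotProduct_mulVec_pos ?_ ?_
  · rw [hAeq]
    exact isHermitian_conjTranspose_mul_mul Aᵀ hSt.1
  · intro x hx
    have hx' : Aᵀ *ᵥ x ≠ 0 := fun h => hx (hinj (h.trans (Matrix.mulVec_zero Aᵀ).symm))
    have := hSt.dotProduct_mulVec_pos hx'
    rw [hAeq]
    simpa only [star_mulVec, dotProduct_mulVec, vecMul_vecMul, ← hAeq] using this

/-- covariance part of Lemma B.1: for a full row rank `q × p` matrix `A`
(`p > q`) and positive-definite `Σ_y`, `Σ_θ`, the BJW covariance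
`Σ̃ = (Aᵀ Σ_y⁻¹ A - Aᵀ (A Σ_θ Aᵀ)⁻¹ A + Σ_θ⁻¹)⁻¹` satisfies `A Σ̃ Aᵀ = Σ_y`. -/
theorem stmt6
    (p q : ℕ) (hpq : q < p)
    (A : Matrix (Fin q) (Fin p) ℝ) (hA : A.rank = q)
    (Sy : Matrix (Fin q) (Fin q) ℝ) (hSy : Sy.PosDef) (hSy_symm : Sy.IsSymm)
    (St : Matrix (Fin p) (Fin p) ℝ) (hSt : St.PosDef) (hSt_symm : St.IsSymm)
    (tS : Matrix (Fin p) (Fin p) ℝ)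
    (htS : tS = (Aᵀ * Sy⁻¹ * A - Aᵀ * (A * St * Aᵀ)⁻¹ * A + St⁻¹)⁻¹)
    (htS_inv : IsUnit (Aᵀ * Sy⁻¹ * A - Aᵀ * (A * St * Aᵀ)⁻¹ * A + St⁻¹).det) :
    A * tS * Aᵀ = Sy := by
  set B : Matrix (Fin q) (Fin q) ℝ := A * St * Aᵀ with hBdef
  have hB : B.PosDef := aux_posdef_sandwich A hA St hSt
  have hBu : IsUnit B.det := hB.det_pos.ne'.isUnit
  have hB1 : B⁻¹ * B = 1 := nonsing_inv_mul _ hBu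
  have hB2 : B * B⁻¹ = 1 := mul_nonsing_inv _ hBu
  have hSyu : IsUnit Sy.det := hSy.det_pos.ne'.isUnit
  have hSy1 : Sy⁻¹ * Sy = 1 := nonsing_inv_mul _ hSyu
  have hStu : IsUnit St.det := hSt.det_pos.ne'.isUnit
  have hSt1 : St⁻¹ * St = 1 := nonsing_inv_mul _ hStu
  set X : Matrix (Fin p) (Fin p) ℝ :=
    St - St * Aᵀ * B⁻¹ * (A * St) + St * Aᵀ * (B⁻¹ * Sy * B⁻¹) * (A * St) with hXdef
  have hAX : A * X = Sy * (B⁻¹ * (A * St)) := by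
    rw [hXdef]
    rw [Matrix.mul_add, Matrix.mul_sub]
    have e1 : A * (St * Aᵀ * B⁻¹ * (A * St)) = A * St := by
      rw [show A * (St * Aᵀ * B⁻¹ * (A * St)) = (A * St * Aᵀ) * B⁻¹ * (A * St) by
        simp only [Matrix.mul_assoc], ← hBdef, hB2, Matrix.one_mul]
    have e2 : A * (St * Aᵀ * (B⁻¹ * Sy * B⁻¹) * (A * St))
        = Sy * (B⁻¹ * (A * St)) := by
      rw [show A * (St * Aᵀ * (B⁻¹ * Sy * B⁻¹) * (A * St))
          = (A * St * Aᵀ) * B⁻¹ * (Sy * (B⁻¹ * (A * St))) by simp only [Matrix.mul_assoc],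
        ← hBdef, hB2, Matrix.one_mul]
    rw [e1, e2]
    abel
  have hMX : (Aᵀ * Sy⁻¹ * A - Aᵀ * B⁻¹ * A + St⁻¹) * X = 1 := by
    rw [Matrix.add_mul, Matrix.sub_mul]
    have e1 : Aᵀ * Sy⁻¹ * A * X = Aᵀ * (B⁻¹ * (A * St)) := by
      rw [Matrix.mul_assoc (Aᵀ * Sy⁻¹) A X, hAX,
        show Aᵀ * Sy⁻¹ * (Sy * (B⁻¹ * (A * St))) = Aᵀ * ((Sy⁻¹ * Sy) * (B⁻¹ * (A * St))) by
          simp only [Matrix.mul_assoc], hSy1, Matrix.one_mul]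
    have e2 : Aᵀ * B⁻¹ * A * X = Aᵀ * (B⁻¹ * (Sy * (B⁻¹ * (A * St)))) := by
      rw [Matrix.mul_assoc (Aᵀ * B⁻¹) A X, hAX, Matrix.mul_assoc]
    have e3 : St⁻¹ * X = 1 - Aᵀ * (B⁻¹ * (A * St)) + Aᵀ * (B⁻¹ * (Sy * (B⁻¹ * (A * St)))) := by
      have f1 : St⁻¹ * (St * Aᵀ * B⁻¹ * (A * St)) = Aᵀ * (B⁻¹ * (A * St)) := by
        rw [show St⁻¹ * (St * Aᵀ * B⁻¹ * (A * St)) = (St⁻¹ * St) * (Aᵀ * (B⁻¹ * (A * St))) by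
          simp only [Matrix.mul_assoc], hSt1, Matrix.one_mul]
      have f2 : St⁻¹ * (St * Aᵀ * (B⁻¹ * Sy * B⁻¹) * (A * St))
          = Aᵀ * (B⁻¹ * (Sy * (B⁻¹ * (A * St)))) := by
        rw [show St⁻¹ * (St * Aᵀ * (B⁻¹ * Sy * B⁻¹) * (A * St))
            = (St⁻¹ * St) * (Aᵀ * (B⁻¹ * (Sy * (B⁻¹ * (A * St))))) by
          simp only [Matrix.mul_assoc], hSt1, Matrix.one_mul]
      rw [hXdef, Matrix.mul_add, Matrix.mul_sub, hSt1, f1, f2]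
    rw [e1, e2, e3]
    abel
  have htSX : tS = X := by
    rw [htS]
    exact inv_eq_right_inv hMX
  rw [htSX, hAX]
  rw [show Sy * (B⁻¹ * (A * St)) * Aᵀ = Sy * (B⁻¹ * (A * St * Aᵀ)) by
    simp only [Matrix.mul_assoc], ← hBdef, hB1, Matrix.mul_one]
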